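/- arXiv:1410.4858 — 5 statements merged into one kernel-verified Lean document; each statement's English description precedes it below -/
import Mathlib

section
/- Let μ : [0,∞) × [0,∞) → ℝ be continuous, let V : [0,∞) × [0,∞) → [0,∞) be C¹, and suppose y : [0,∞) × [0,∞) → [0,∞) is a C¹ function satisfying y(t,λ) = λ + ∫₀ᵗ μ(u, y(u,λ)) du for all t, λ ≥ 0. Then the following are equivalent: (i) for every x ≥ 0 the function p_x(t,λ) = exp(−x·y(t,λ) − ∫₀ᵗ V(t−u, y(u,λ)) du) satisfies ∂p_x/∂t(t,λ) = μ(t,λ) ∂p_x/∂λ(t,λ) − V(t,λ) p_x(t,λ) with p_x(0,λ) = e^{−xλ}; (ii) for all t, λ ≥ 0 one has μ(t, y(t,λ)) = μ(t,λ) · ∂y/∂λ(t,λ) and V(t,λ) = ∇_{t,λ}( ∫₀ᵗ V(t−u, y(u,λ)) du ), where ∇_{t,λ} denotes the operator ∂/∂t − μ(t,λ) ∂/∂λ. -/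
open Set

open MeasureTheory intervalIntegral

lemma partial_hasDerivAt {Φ : ℝ → ℝ → ℝ} (hΦ : ContDiff ℝ 1 (Function.uncurry Φ))
    (u x : ℝ) :
    HasDerivAt (fun x => Φ x u) (fderiv ℝ (Function.uncurry Φ) (x, u) (1, 0)) x := by
  have h : HasFDerivAt (Function.uncurry Φ) (fderiv ℝ (Function.uncurry Φ) (x, u)) (x, u) :=
    (hΦ.differentiable one_ne_zero (x, u)).hasFDerivAt
  have hl : HasDerivAt (fun x : ℝ => ((x, u) : ℝ × ℝ)) ((1 : ℝ), (0 : ℝ)) x :=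
    (hasDerivAt_id x).prodMk (hasDerivAt_const x u)
  exact h.comp_hasDerivAt x hl

lemma hasDerivAt_param {Φ : ℝ → ℝ → ℝ} (hΦ : ContDiff ℝ 1 (Function.uncurry Φ))
    (a b x₀ : ℝ) :
    HasDerivAt (fun x => ∫ u in a..b, Φ x u)
      (∫ u in a..b, fderiv ℝ (Function.uncurry Φ) (x₀, u) (1, 0)) x₀ := by
  have hc : Continuous (Function.uncurry Φ) := hΦ.continuous
  have hcx : ∀ x : ℝ, Continuous (fun u => Φ x u) := fun x =>
    hc.comp (continuous_const.prodMk continuous_id)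
  have hfd : Continuous (fun p : ℝ × ℝ => fderiv ℝ (Function.uncurry Φ) p (1, 0)) :=
    (hΦ.continuous_fderiv one_ne_zero).clm_apply continuous_const
  obtain ⟨C, hC⟩ : ∃ C, ∀ p ∈ Metric.closedBall x₀ 1 ×ˢ uIcc a b,
      ‖fderiv ℝ (Function.uncurry Φ) p (1, 0)‖ ≤ C :=
    ((isCompact_closedBall x₀ 1).prod isCompact_uIcc).exists_bound_of_continuousOn
      hfd.continuousOn
  refine (intervalIntegral.hasDerivAt_integral_of_dominated_loc_of_deriv_le
      (F := fun x u => Φ x u)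
      (F' := fun x u => fderiv ℝ (Function.uncurry Φ) (x, u) (1, 0))
      (bound := fun _ => C) (Metric.ball_mem_nhds x₀ one_pos) ?_ ?_ ?_ ?_ ?_ ?_).2
  · exact Filter.Eventually.of_forall fun x => (hcx x).aestronglyMeasurable
  · exact (hcx x₀).intervalIntegrable a b
  · exact (hfd.comp (continuous_const.prodMk continuous_id)).aestronglyMeasurable
  · refine Filter.Eventually.of_forall fun u hu x hx => ?_
    exact hC (x, u) ⟨Metric.ball_subset_closedBall hx, uIoc_subset_uIcc hu⟩
  · exact intervalIntegrable_const
  · exact Filter.Eventually.of_forall fun u hu x hx => partial_hasDerivAt hΦ u x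

lemma diffAt_movingIntegral {W : ℝ → ℝ → ℝ} (hW : ContDiff ℝ 1 (Function.uncurry W))
    (t₀ : ℝ) :
    DifferentiableAt ℝ (fun s => ∫ u in (0:ℝ)..s, W s u) t₀ := by
  have hc : Continuous (Function.uncurry W) := hW.continuous
  have hcs : ∀ s : ℝ, Continuous (fun u => W s u) := fun s =>
    hc.comp (continuous_const.prodMk continuous_id)
  -- pieces
  have Hh : HasDerivAt (fun s => ∫ u in (0:ℝ)..t₀, W s u)
      (∫ u in (0:ℝ)..t₀, fderiv ℝ (Function.uncurry W) (t₀, u) (1, 0)) t₀ :=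
    hasDerivAt_param hW 0 t₀ t₀
  have Hk₁ : HasDerivAt (fun s => ∫ u in t₀..s, W t₀ u) (W t₀ t₀) t₀ :=
    ((hcs t₀).integral_hasStrictDerivAt t₀ t₀).hasDerivAt
  have Hk₂ : HasDerivAt (fun s => ∫ u in t₀..s, (W s u - W t₀ u)) 0 t₀ := by
    rw [hasDerivAt_iff_isLittleO]
    simp only [intervalIntegral.integral_same, sub_zero, smul_zero]
    rw [Asymptotics.isLittleO_iff]
    intro ε hε
    obtain ⟨δ, hδ, hδ'⟩ := Metric.continuousAt_iff.mp hc.continuousAt (ε/2) (half_pos hε)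
    filter_upwards [Metric.ball_mem_nhds t₀ hδ] with s hs
    have hb : ∀ u ∈ Set.uIoc t₀ s, ‖W s u - W t₀ u‖ ≤ ε := by
      intro u hu
      have hut : |u - t₀| ≤ |s - t₀| := by
        rcases le_total t₀ s with h | h
        · rw [uIoc_of_le h] at hu
          rw [abs_of_nonneg (by linarith [hu.1.le]), abs_of_nonneg (by linarith)]
          linarith [hu.2]
        · rw [uIoc_of_ge h] at hu
          rw [abs_of_nonpos (by linarith [hu.2]), abs_of_nonpos (by linarith)]
          linarith [hu.1.le]
      have hs' : dist s t₀ < δ := hs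
      have hu1 : dist ((s, u) : ℝ × ℝ) (t₀, t₀) < δ := by
        rw [Prod.dist_eq]
        refine max_lt hs' ?_
        calc dist u t₀ = |u - t₀| := Real.dist_eq u t₀
          _ ≤ |s - t₀| := hut
          _ = dist s t₀ := (Real.dist_eq s t₀).symm
          _ < δ := hs'
      have hu2 : dist ((t₀, u) : ℝ × ℝ) (t₀, t₀) < δ := by
        rw [Prod.dist_eq]
        refine max_lt (by simpa using hδ) ?_
        calc dist u t₀ = |u - t₀| := Real.dist_eq u t₀
          _ ≤ |s - t₀| := hut
          _ = dist s t₀ := (Real.dist_eq s t₀).symm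
          _ < δ := hs'
      have e1 := hδ' hu1
      have e2 := hδ' hu2
      simp only [Function.uncurry, Real.dist_eq] at e1 e2
      rw [Real.norm_eq_abs]
      calc |W s u - W t₀ u| ≤ |W s u - W t₀ t₀| + |W t₀ t₀ - W t₀ u| := abs_sub_le _ _ _
        _ ≤ ε / 2 + ε / 2 := by
            refine add_le_add e1.le ?_
            rw [abs_sub_comm]
            exact e2.le
        _ = ε := add_halves ε
    calc ‖∫ u in t₀..s, (W s u - W t₀ u)‖ ≤ ε * |s - t₀| :=
          intervalIntegral.norm_integral_le_of_norm_le_const hb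
      _ = ε * ‖s - t₀‖ := rfl
  -- assemble
  have key : (fun s => ∫ u in (0:ℝ)..s, W s u)
      = fun s => (∫ u in (0:ℝ)..t₀, W s u)
        + ((∫ u in t₀..s, W t₀ u) + ∫ u in t₀..s, (W s u - W t₀ u)) := by
    funext s
    have i1 : IntervalIntegrable (fun u => W t₀ u) volume t₀ s :=
      (hcs t₀).intervalIntegrable t₀ s
    have i2 : IntervalIntegrable (fun u => W s u - W t₀ u) volume t₀ s :=
      ((hcs s).sub (hcs t₀)).intervalIntegrable t₀ s
    rw [← intervalIntegral.integral_add i1 i2]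
    simp only [add_sub_cancel]
    rw [intervalIntegral.integral_add_adjacent_intervals
      ((hcs s).intervalIntegrable 0 t₀) ((hcs s).intervalIntegrable t₀ s)]
  rw [key]
  exact (Hh.add (Hk₁.add Hk₂)).differentiableAt

lemma char_deriv {μ y : ℝ → ℝ → ℝ} (hμ : Continuous (Function.uncurry μ))
    (hy : ContDiff ℝ 1 (Function.uncurry y))
    (hychar : ∀ t l : ℝ, 0 ≤ t → 0 ≤ l → y t l = l + ∫ u in (0:ℝ)..t, μ u (y u l))
    {t l : ℝ} (ht : 0 ≤ t) (hl : 0 ≤ l) :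
    deriv (fun s => y s l) t = μ t (y t l) := by
  have hg : Continuous (fun u => μ u (y u l)) :=
    hμ.comp (continuous_id.prodMk
      (hy.continuous.comp (continuous_id.prodMk continuous_const)))
  have Hf : HasDerivAt (fun s => l + ∫ u in (0:ℝ)..s, μ u (y u l)) (μ t (y t l)) t :=
    ((hg.integral_hasStrictDerivAt 0 t).hasDerivAt).const_add l
  have Dy : DifferentiableAt ℝ (fun s => y s l) t :=
    by have := ((hy.differentiable one_ne_zero) (t, l)).comp t
        (differentiableAt_id.prodMk (differentiableAt_const l) :
          DifferentiableAt ℝ (fun s : ℝ => ((s, l) : ℝ × ℝ)) t); exact this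
  have hud : UniqueDiffWithinAt ℝ (Ici (0:ℝ)) t := uniqueDiffOn_Ici 0 t ht
  calc deriv (fun s => y s l) t = derivWithin (fun s => y s l) (Ici 0) t :=
        (Dy.derivWithin hud).symm
    _ = derivWithin (fun s => l + ∫ u in (0:ℝ)..s, μ u (y u l)) (Ici 0) t := by
        apply derivWithin_congr
        · exact fun s hs => hychar s l hs hl
        · exact hychar t l ht hl
    _ = μ t (y t l) := (Hf.hasDerivWithinAt).derivWithin hud

/-- Characterization (Proposition 2.4 of the paper): the family
`p_x(t,λ) = exp(−x y(t,λ) − ∫₀ᵗ V(t−u, y(u,λ)) du)` solves the Cauchy problem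
`∂p/∂t = μ ∂p/∂λ − V p`, `p(0,λ) = e^{−xλ}`, for every `x ≥ 0`, if and only if
`μ(t, y(t,λ)) = μ(t,λ) ∂y/∂λ(t,λ)` and
`V(t,λ) = ∇_{t,λ}(∫₀ᵗ V(t−u, y(u,λ)) du)` where `∇_{t,λ} = ∂/∂t − μ(t,λ) ∂/∂λ`. -/
theorem stmt1 (μ V y : ℝ → ℝ → ℝ)
    (hμ : Continuous (Function.uncurry μ))
    (hV : ContDiff ℝ 1 (Function.uncurry V))
    (hVnn : ∀ t l : ℝ, 0 ≤ t → 0 ≤ l → 0 ≤ V t l)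
    (hy : ContDiff ℝ 1 (Function.uncurry y))
    (hynn : ∀ t l : ℝ, 0 ≤ t → 0 ≤ l → 0 ≤ y t l)
    (hychar : ∀ t l : ℝ, 0 ≤ t → 0 ≤ l →
      y t l = l + ∫ u in (0:ℝ)..t, μ u (y u l)) :
    ((∀ x ≥ (0:ℝ), ∀ t l : ℝ, 0 ≤ t → 0 ≤ l →
        (deriv (fun s => Real.exp (-(x * y s l) - ∫ u in (0:ℝ)..s, V (s - u) (y u l))) t
          = μ t l *
              deriv (fun m => Real.exp (-(x * y t m) - ∫ u in (0:ℝ)..t, V (t - u) (y u m))) l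
            - V t l * Real.exp (-(x * y t l) - ∫ u in (0:ℝ)..t, V (t - u) (y u l)))
        ∧ Real.exp (-(x * y 0 l) - ∫ u in (0:ℝ)..(0:ℝ), V (0 - u) (y u l))
            = Real.exp (-(x * l)))
    ↔ (∀ t l : ℝ, 0 ≤ t → 0 ≤ l →
        μ t (y t l) = μ t l * deriv (fun m => y t m) l
        ∧ V t l = deriv (fun s => ∫ u in (0:ℝ)..s, V (s - u) (y u l)) t
            - μ t l * deriv (fun m => ∫ u in (0:ℝ)..t, V (t - u) (y u m)) l)) := by
    -- a bundle of differentiability facts, for fixed t l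
  have setup : ∀ t l : ℝ,
      HasDerivAt (fun s => y s l) (deriv (fun s => y s l) t) t ∧
      HasDerivAt (fun m => y t m) (deriv (fun m => y t m) l) l ∧
      HasDerivAt (fun s => ∫ u in (0:ℝ)..s, V (s - u) (y u l))
        (deriv (fun s => ∫ u in (0:ℝ)..s, V (s - u) (y u l)) t) t ∧
      HasDerivAt (fun m => ∫ u in (0:ℝ)..t, V (t - u) (y u m))
        (deriv (fun m => ∫ u in (0:ℝ)..t, V (t - u) (y u m)) l) l := by
    intro t l
    refine ⟨?_, ?_, ?_, ?_⟩
    · exact (((hy.differentiable one_ne_zero) (t, l)).comp t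
        (differentiableAt_id.prodMk (differentiableAt_const l))).hasDerivAt
    · exact (((hy.differentiable one_ne_zero) (t, l)).comp l
        ((differentiableAt_const t).prodMk differentiableAt_id)).hasDerivAt
    · refine (diffAt_movingIntegral (W := fun s u => V (s - u) (y u l)) ?_ t).hasDerivAt
      exact hV.comp ((contDiff_fst.sub contDiff_snd).prodMk
        (hy.comp (contDiff_snd.prodMk contDiff_const)))
    · refine ((hasDerivAt_param (Φ := fun m u => V (t - u) (y u m)) ?_ 0 t l).differentiableAt).hasDerivAt
      exact hV.comp ((contDiff_const.sub contDiff_snd).prodMk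
        (hy.comp (contDiff_snd.prodMk contDiff_fst)))
  -- derivative of the exponential family
  have expDeriv : ∀ x t l : ℝ,
      (deriv (fun s => Real.exp (-(x * y s l) - ∫ u in (0:ℝ)..s, V (s - u) (y u l))) t
        = Real.exp (-(x * y t l) - ∫ u in (0:ℝ)..t, V (t - u) (y u l)) *
            (-(x * deriv (fun s => y s l) t)
              - deriv (fun s => ∫ u in (0:ℝ)..s, V (s - u) (y u l)) t)) ∧
      (deriv (fun m => Real.exp (-(x * y t m) - ∫ u in (0:ℝ)..t, V (t - u) (y u m))) l
        = Real.exp (-(x * y t l) - ∫ u in (0:ℝ)..t, V (t - u) (y u l)) *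
            (-(x * deriv (fun m => y t m) l)
              - deriv (fun m => ∫ u in (0:ℝ)..t, V (t - u) (y u m)) l)) := by
    intro x t l
    obtain ⟨D1, D2, D3, D4⟩ := setup t l
    constructor
    · exact (((D1.const_mul x).neg.sub D3).exp).deriv
    · exact (((D2.const_mul x).neg.sub D4).exp).deriv
  have init : ∀ x l : ℝ, 0 ≤ l →
      Real.exp (-(x * y 0 l) - ∫ u in (0:ℝ)..(0:ℝ), V (0 - u) (y u l))
        = Real.exp (-(x * l)) := by
    intro x l hl
    have h0 : y 0 l = l := by
      have := hychar 0 l le_rfl hl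
      simpa using this
    rw [h0, intervalIntegral.integral_same, sub_zero]
  constructor
  · intro H t l ht hl
    obtain ⟨D1, D2, D3, D4⟩ := setup t l
    have charEq : deriv (fun s => y s l) t = μ t (y t l) :=
      char_deriv hμ hy hychar ht hl
    set p := Real.exp (-(0 * y t l) - ∫ u in (0:ℝ)..t, V (t - u) (y u l)) with hp
    have E0 := (H 0 le_rfl t l ht hl).1
    have E1 := (H 1 zero_le_one t l ht hl).1
    rw [(expDeriv 0 t l).1, (expDeriv 0 t l).2] at E0
    rw [(expDeriv 1 t l).1, (expDeriv 1 t l).2] at E1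
    have hp0 : Real.exp (-(0 * y t l) - ∫ u in (0:ℝ)..t, V (t - u) (y u l)) ≠ 0 :=
      (Real.exp_pos _).ne'
    have hp1 : Real.exp (-(1 * y t l) - ∫ u in (0:ℝ)..t, V (t - u) (y u l)) ≠ 0 :=
      (Real.exp_pos _).ne'
    -- scalar equations
    have s0 : -(0 * deriv (fun s => y s l) t)
        - deriv (fun s => ∫ u in (0:ℝ)..s, V (s - u) (y u l)) t
        = μ t l * (-(0 * deriv (fun m => y t m) l)
            - deriv (fun m => ∫ u in (0:ℝ)..t, V (t - u) (y u m)) l) - V t l := by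
      apply mul_left_cancel₀ hp0
      linear_combination E0
    have s1 : -(1 * deriv (fun s => y s l) t)
        - deriv (fun s => ∫ u in (0:ℝ)..s, V (s - u) (y u l)) t
        = μ t l * (-(1 * deriv (fun m => y t m) l)
            - deriv (fun m => ∫ u in (0:ℝ)..t, V (t - u) (y u m)) l) - V t l := by
      apply mul_left_cancel₀ hp1
      linear_combination E1
    constructor
    · linear_combination -charEq + s0 - s1
    · linear_combination s0
  · intro H x hx t l ht hl
    obtain ⟨D1, D2, D3, D4⟩ := setup t l
    obtain ⟨c1, c2⟩ := H t l ht hl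
    have charEq : deriv (fun s => y s l) t = μ t (y t l) :=
      char_deriv hμ hy hychar ht hl
    refine ⟨?_, init x l hl⟩
    rw [(expDeriv x t l).1, (expDeriv x t l).2]
    have c1' : deriv (fun s => y s l) t = μ t l * deriv (fun m => y t m) l :=
      charEq.trans c1
    set q := Real.exp (-(x * y t l) - ∫ u in (0:ℝ)..t, V (t - u) (y u l))
    linear_combination (-(x * q)) * c1' + q * c2
end

section
/- Let θ : [0,∞) → (−∞, 0] be a C¹ function. Set k(t) = exp(2∫₀ᵗ θ(u) du), y(t,λ) = λ k(t) / (1 + 2λ ∫₀ᵗ k(u) du), and μ(t,z) = −2z² + 2zθ(t). Then the intertwining condition μ(t, y(t,λ)) = μ(t,λ) · ∂y/∂λ(t,λ) holds for all t ≥ 0 and λ ≥ 0 if and only if θ is constant. -/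
open Set intervalIntegral

lemma ftc_deriv {f : ℝ → ℝ} (hf : Continuous f) (t : ℝ) :
    HasDerivAt (fun s => ∫ u in (0:ℝ)..s, f u) (f t) t :=
  integral_hasDerivAt_right (hf.intervalIntegrable _ _)
    (hf.stronglyMeasurableAtFilter _ _) hf.continuousAt

lemma zero_at_zero {g : ℝ → ℝ} (hg : Continuous g) (h : ∀ x > (0:ℝ), g x = 0) :
    g 0 = 0 := by
  have h1 : EqOn g (fun _ => 0) (Ioi 0) := fun x hx => h x hx
  have : EqOn g (fun _ => 0) (closure (Ioi (0:ℝ))) := h1.closure hg continuous_const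
  simpa using this (by simp [closure_Ioi] : (0:ℝ) ∈ closure (Ioi (0:ℝ)))

lemma const_of_deriv {f : ℝ → ℝ} (hf : Differentiable ℝ f)
    (h : ∀ x ≥ (0:ℝ), deriv f x = 0) : ∀ t ≥ (0:ℝ), f t = f 0 := by
  intro t ht
  rcases eq_or_lt_of_le ht with h0 | h0
  · rw [← h0]
  · refine constant_of_derivWithin_zero (hf.differentiableOn) ?_ t (by constructor <;> linarith)
    intro x hx
    rw [(hf x).derivWithin ((uniqueDiffOn_Icc h0).uniqueDiffWithinAt ⟨hx.1, hx.2.le⟩)]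
    exact h x hx.1

/-- For `μ(t,z) = −2z² + 2zθ(t)` and the characteristic field
`y(t,λ) = λk(t)/(1 + 2λ∫₀ᵗ k)`, with `k(t) = exp(2∫₀ᵗ θ)`, the intertwining
condition `μ(t, y(t,λ)) = μ(t,λ) ∂y/∂λ(t,λ)` holds on `[0,∞)²` iff `θ` is
constant. -/
theorem stmt4 (θ : ℝ → ℝ) (hθ : ContDiff ℝ 1 θ) (hθnp : ∀ t ≥ (0:ℝ), θ t ≤ 0)
    (k : ℝ → ℝ) (hk : ∀ t, k t = Real.exp (2 * ∫ u in (0:ℝ)..t, θ u))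
    (y : ℝ → ℝ → ℝ)
    (hy : ∀ t l, y t l = l * k t / (1 + 2 * l * ∫ u in (0:ℝ)..t, k u))
    (μ : ℝ → ℝ → ℝ) (hμ : ∀ t z, μ t z = -2 * z ^ 2 + 2 * z * θ t) :
    (∀ t l : ℝ, 0 ≤ t → 0 ≤ l →
        μ t (y t l) = μ t l * deriv (fun m => y t m) l)
      ↔ ∃ c : ℝ, ∀ t ≥ (0:ℝ), θ t = c := by
  have hθc : Continuous θ := hθ.continuous
  have hθd : Differentiable ℝ θ := hθ.differentiable one_ne_zero
  have hθ'c : Continuous (deriv θ) := hθ.continuous_deriv le_rfl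
  set K : ℝ → ℝ := fun t => ∫ u in (0:ℝ)..t, k u with hKdef
  have hkpos : ∀ t, 0 < k t := fun t => (hk t) ▸ Real.exp_pos _
  -- derivative of k
  have hkd : ∀ t, HasDerivAt k (2 * θ t * k t) t := by
    intro t
    have h1 : HasDerivAt (fun s => Real.exp (2 * ∫ u in (0:ℝ)..s, θ u))
        (Real.exp (2 * ∫ u in (0:ℝ)..t, θ u) * (2 * θ t)) t :=
      ((ftc_deriv hθc t).const_mul 2).exp
    have h2 : (fun s => Real.exp (2 * ∫ u in (0:ℝ)..s, θ u)) = k := funext fun s => (hk s).symm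
    rw [h2, ← hk t] at h1
    convert h1 using 1; ring
  have hkdiff : Differentiable ℝ k := fun t => (hkd t).differentiableAt
  have hkc : Continuous k := hkdiff.continuous
  have hKd : ∀ t, HasDerivAt K (k t) t := fun t => ftc_deriv hkc t
  have hK0 : K 0 = 0 := by simp [hKdef]
  have hk0 : k 0 = 1 := by simp [hk 0]
  have hKnn : ∀ t ≥ (0:ℝ), 0 ≤ K t := fun t ht =>
    integral_nonneg ht fun u _ => (hkpos u).le
  have hKpos : ∀ t > (0:ℝ), 0 < K t := fun t ht =>
    intervalIntegral_pos_of_pos (hkc.intervalIntegrable _ _) hkpos ht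
  -- denominator positive
  have hD : ∀ t l : ℝ, 0 ≤ t → 0 ≤ l → 0 < 1 + 2 * l * K t := by
    intro t l ht hl
    have := hKnn t ht
    nlinarith
  -- derivative of y in l
  have hyd : ∀ t l : ℝ, 0 ≤ t → 0 ≤ l →
      deriv (fun m => y t m) l
        = (k t * (1 + 2 * l * K t) - l * k t * (2 * K t)) / (1 + 2 * l * K t) ^ 2 := by
    intro t l ht hl
    have hfun : (fun m => y t m) = fun m => m * k t / (1 + 2 * m * K t) :=
      funext fun m => hy t m
    rw [hfun]
    have hnum : HasDerivAt (fun m : ℝ => m * k t) (k t) l := by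
      simpa using (hasDerivAt_id l).mul_const (k t)
    have hden : HasDerivAt (fun m : ℝ => 1 + 2 * m * K t) (2 * K t) l := by
      have : HasDerivAt (fun m : ℝ => 2 * m) 2 l := by
        simpa using (hasDerivAt_id l).const_mul 2
      simpa using (this.mul_const (K t)).const_add 1
    exact ((hnum.div hden (ne_of_gt (hD t l ht hl)))).deriv
  -- the key reformulation
  have key : (∀ t l : ℝ, 0 ≤ t → 0 ≤ l →
        μ t (y t l) = μ t l * deriv (fun m => y t m) l)
      ↔ (∀ t ≥ (0:ℝ), k t = 1 + 2 * θ t * K t) := by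
    constructor
    · intro H t ht
      have h1 := H t 1 ht zero_le_one
      rw [hyd t 1 ht zero_le_one, hy t 1, hμ, hμ] at h1
      have hKt : (∫ u in (0:ℝ)..t, k u) = K t := rfl
      rw [hKt] at h1
      have hDpos : (0:ℝ) < 1 + 2 * K t := by have := hD t 1 ht zero_le_one; linarith
      have hDne : (1 + 2 * K t) ≠ 0 := ne_of_gt hDpos
      field_simp at h1
      have hphi : (2 * k t * (1 + 2 * K t) ^ 3) * (1 + 2 * θ t * K t - k t) = 0 := by
        linear_combination 2 * (1 + 2 * K t) ^ 3 * h1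
      rcases mul_eq_zero.1 hphi with h | h
      · have h2 : (0:ℝ) < 2 * k t * (1 + 2 * K t) ^ 3 :=
          mul_pos (by linarith [hkpos t]) (pow_pos hDpos 3)
        exact absurd h (ne_of_gt h2)
      · linarith
    · intro E t l ht hl
      rw [hyd t l ht hl, hy t l, hμ, hμ]
      have hKt : (∫ u in (0:ℝ)..t, k u) = K t := rfl
      rw [hKt]
      have hDne : (1 + 2 * l * K t) ≠ 0 := ne_of_gt (hD t l ht hl)
      have hE := E t ht
      rw [hE]
      field_simp
      ring
  rw [key]
  -- F and its derivative
  have hFd : ∀ t, HasDerivAt (fun s => k s - 2 * θ s * K s)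
      (-(2 * deriv θ t * K t)) t := by
    intro t
    have h1 : HasDerivAt (fun s => 2 * θ s * K s)
        ((2 * deriv θ t) * K t + (2 * θ t) * k t) t := by
      have := (((hθd t).hasDerivAt.const_mul 2).mul (hKd t))
      exact this.congr_deriv (by ring)
    have := (hkd t).sub h1
    exact this.congr_deriv (by ring)
  constructor
  · -- k = 1 + 2θK on [0,∞) ⇒ θ constant
    intro E
    refine ⟨θ 0, ?_⟩
    have hθ'0 : ∀ x ≥ (0:ℝ), deriv θ x = 0 := by
      have hpos : ∀ x > (0:ℝ), deriv θ x = 0 := by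
        intro x hx
        -- F is locally constant near x
        have hev : (fun s => k s - 2 * θ s * K s) =ᶠ[nhds x] fun _ => 1 := by
          filter_upwards [Ioi_mem_nhds hx] with s hs
          have := E s (le_of_lt hs)
          linarith
        have hd0 : deriv (fun s => k s - 2 * θ s * K s) x = 0 := by
          rw [hev.deriv_eq]; simp
        rw [(hFd x).deriv] at hd0
        have hKx := hKpos x hx
        have : deriv θ x * K x = 0 := by linarith
        rcases mul_eq_zero.1 this with h | h
        · exact h
        · exact absurd h (ne_of_gt hKx)
      intro x hx
      rcases eq_or_lt_of_le hx with h | h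
      · rw [← h]; exact zero_at_zero hθ'c hpos
      · exact hpos x h
    exact fun t ht => const_of_deriv hθd hθ'0 t ht
  · -- θ constant ⇒ k = 1 + 2θK on [0,∞)
    rintro ⟨c, hc⟩
    have hθ'0 : ∀ x ≥ (0:ℝ), deriv θ x = 0 := by
      have hpos : ∀ x > (0:ℝ), deriv θ x = 0 := by
        intro x hx
        have hev : θ =ᶠ[nhds x] fun _ => c := by
          filter_upwards [Ioi_mem_nhds hx] with s hs
          exact hc s (le_of_lt hs)
        rw [hev.deriv_eq]; simp
      intro x hx
      rcases eq_or_lt_of_le hx with h | h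
      · rw [← h]; exact zero_at_zero hθ'c hpos
      · exact hpos x h
    have hFdiff : Differentiable ℝ (fun s => k s - 2 * θ s * K s) :=
      fun t => (hFd t).differentiableAt
    have hF0 : ∀ x ≥ (0:ℝ), deriv (fun s => k s - 2 * θ s * K s) x = 0 := by
      intro x hx
      rw [(hFd x).deriv, hθ'0 x hx]; ring
    intro t ht
    have := const_of_deriv hFdiff hF0 t ht
    rw [hk0, hK0] at this
    linarith
end

section
/- Fix δ ≥ 0 and x ≥ 0. Define p(t,λ) = (1 + 2λt(1−t))^{−δ/2} · exp( −x λ (1−t)² / (1 + 2λt(1−t)) ) for t ∈ [0,1) and λ ≥ 0. Then p(0,λ) = e^{−xλ} and p solves ∂p/∂t(t,λ) = −2λ(λ + 1/(1−t)) ∂p/∂λ(t,λ) − δλ p(t,λ) for all t ∈ [0,1) and λ ≥ 0. -/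
open Set

/-- The closed form of the Laplace transform of the δ-dimensional squared Bessel
bridge started at x has initial value `e^{−xλ}` and solves
`∂p/∂t = −2λ(λ + 1/(1−t)) ∂p/∂λ − δλ p` on `[0,1) × [0,∞)`. -/
theorem stmt8 (δ x : ℝ) (hδ : 0 ≤ δ) (hx : 0 ≤ x)
    (p : ℝ → ℝ → ℝ)
    (hp : ∀ t l : ℝ, p t l
      = (1 + 2 * l * t * (1 - t)) ^ (-(δ / 2))
          * Real.exp (-(x * l * (1 - t) ^ 2 / (1 + 2 * l * t * (1 - t))))) :
    (∀ l ≥ (0:ℝ), p 0 l = Real.exp (-(x * l)))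
    ∧ ∀ t l : ℝ, 0 ≤ t → t < 1 → 0 ≤ l →
        deriv (fun s => p s l) t
          = -2 * l * (l + 1 / (1 - t)) * deriv (fun m => p t m) l
            - δ * l * p t l := by
  constructor
  · intro l _
    rw [hp]; norm_num
  · intro t l ht ht1 hl
    have hs : (0:ℝ) < 1 - t := by linarith
    have hA : (0:ℝ) < 1 + 2 * l * t * (1 - t) := by
      nlinarith [mul_nonneg (mul_nonneg (mul_nonneg (by norm_num : (0:ℝ) ≤ 2) hl) ht) hs.le]
    -- derivative in t
    have hAt : HasDerivAt (fun s : ℝ => 1 + 2 * l * s * (1 - s)) (2 * l * (1 - 2 * t)) t := by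
      have h1 : HasDerivAt (fun s : ℝ => 2 * l * s) (2 * l) t := by
        simpa using (hasDerivAt_id t).const_mul (2 * l)
      have h2 : HasDerivAt (fun s : ℝ => 1 - s) (-1) t := by
        simpa using (hasDerivAt_id t).const_sub 1
      have := (h1.fun_mul h2).const_add 1
      exact this.congr_deriv (by ring)
    have hNt : HasDerivAt (fun s : ℝ => x * l * (1 - s) ^ 2) (-(2 * x * l * (1 - t))) t := by
      have h2 : HasDerivAt (fun s : ℝ => 1 - s) (-1) t := by
        simpa using (hasDerivAt_id t).const_sub 1
      have := (h2.fun_pow 2).const_mul (x * l)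
      exact this.congr_deriv (by ring)
    have hBt : HasDerivAt (fun s : ℝ => x * l * (1 - s) ^ 2 / (1 + 2 * l * s * (1 - s)))
        ((-(2 * x * l * (1 - t)) * (1 + 2 * l * t * (1 - t))
          - x * l * (1 - t) ^ 2 * (2 * l * (1 - 2 * t))) / (1 + 2 * l * t * (1 - t)) ^ 2) t :=
      hNt.div hAt hA.ne'
    have hEt : HasDerivAt (fun s : ℝ => Real.exp (-(x * l * (1 - s) ^ 2 / (1 + 2 * l * s * (1 - s)))))
        (Real.exp (-(x * l * (1 - t) ^ 2 / (1 + 2 * l * t * (1 - t))))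
          * (-((-(2 * x * l * (1 - t)) * (1 + 2 * l * t * (1 - t))
          - x * l * (1 - t) ^ 2 * (2 * l * (1 - 2 * t))) / (1 + 2 * l * t * (1 - t)) ^ 2))) t :=
      hBt.neg.exp
    have hRt : HasDerivAt (fun s : ℝ => (1 + 2 * l * s * (1 - s)) ^ (-(δ / 2)))
        ((-(δ / 2) * (1 + 2 * l * t * (1 - t)) ^ (-(δ / 2) - 1)) * (2 * l * (1 - 2 * t))) t :=
      by have := (Real.hasDerivAt_rpow_const (x := 1 + 2 * l * t * (1 - t)) (p := -(δ / 2)) (Or.inl hA.ne')).comp t hAt; exact this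
    have hpt := hRt.fun_mul hEt
    -- derivative in l
    have hAl : HasDerivAt (fun m : ℝ => 1 + 2 * m * t * (1 - t)) (2 * t * (1 - t)) l := by
      have h : (fun m : ℝ => 1 + 2 * m * t * (1 - t)) = fun m => 1 + 2 * t * (1 - t) * m := by
        funext m; ring
      rw [h]
      simpa using ((hasDerivAt_id l).const_mul (2 * t * (1 - t))).const_add 1
    have hNl : HasDerivAt (fun m : ℝ => x * m * (1 - t) ^ 2) (x * (1 - t) ^ 2) l := by
      have h : (fun m : ℝ => x * m * (1 - t) ^ 2) = fun m => x * (1 - t) ^ 2 * m := by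
        funext m; ring
      rw [h]
      simpa using (hasDerivAt_id l).const_mul (x * (1 - t) ^ 2)
    have hBl : HasDerivAt (fun m : ℝ => x * m * (1 - t) ^ 2 / (1 + 2 * m * t * (1 - t)))
        ((x * (1 - t) ^ 2 * (1 + 2 * l * t * (1 - t))
          - x * l * (1 - t) ^ 2 * (2 * t * (1 - t))) / (1 + 2 * l * t * (1 - t)) ^ 2) l :=
      hNl.div hAl hA.ne'
    have hEl : HasDerivAt (fun m : ℝ => Real.exp (-(x * m * (1 - t) ^ 2 / (1 + 2 * m * t * (1 - t)))))
        (Real.exp (-(x * l * (1 - t) ^ 2 / (1 + 2 * l * t * (1 - t))))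
          * (-((x * (1 - t) ^ 2 * (1 + 2 * l * t * (1 - t))
          - x * l * (1 - t) ^ 2 * (2 * t * (1 - t))) / (1 + 2 * l * t * (1 - t)) ^ 2))) l :=
      hBl.neg.exp
    have hRl : HasDerivAt (fun m : ℝ => (1 + 2 * m * t * (1 - t)) ^ (-(δ / 2)))
        ((-(δ / 2) * (1 + 2 * l * t * (1 - t)) ^ (-(δ / 2) - 1)) * (2 * t * (1 - t))) l :=
      by have := (Real.hasDerivAt_rpow_const (x := 1 + 2 * l * t * (1 - t)) (p := -(δ / 2)) (Or.inl hA.ne')).comp l hAl; exact this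
    have hpl := hRl.fun_mul hEl
    have e1 : (fun s => p s l) = fun s : ℝ => (1 + 2 * l * s * (1 - s)) ^ (-(δ / 2))
          * Real.exp (-(x * l * (1 - s) ^ 2 / (1 + 2 * l * s * (1 - s)))) :=
      funext fun s => hp s l
    have e2 : (fun m => p t m) = fun m : ℝ => (1 + 2 * m * t * (1 - t)) ^ (-(δ / 2))
          * Real.exp (-(x * m * (1 - t) ^ 2 / (1 + 2 * m * t * (1 - t)))) :=
      funext fun m => hp t m
    rw [e1, hpt.deriv, e2, hpl.deriv, hp]
    have key : (1 + 2 * l * t * (1 - t)) ^ (-(δ / 2) - 1)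
        = (1 + 2 * l * t * (1 - t)) ^ (-(δ / 2)) / (1 + 2 * l * t * (1 - t)) := by
      rw [Real.rpow_sub hA, Real.rpow_one]
    rw [key]
    set P := (1 + 2 * l * t * (1 - t)) ^ (-(δ / 2)) with hP
    set E := Real.exp (-(x * l * (1 - t) ^ 2 / (1 + 2 * l * t * (1 - t)))) with hE
    field_simp
    ring
end

section
/- Let α > 0 and x₀ ∈ ℝ, and let I ⊆ [0,∞) be an interval containing 0 on which D(t) := 2α + (x₀ − α)(1 − e^{4αt}) does not vanish. Then the function y(t) = α ( 1 + 2(x₀ − α) e^{4αt} / D(t) ) is differentiable on I, satisfies y(0) = x₀, and solves the Riccati equation y'(t) = 2 y(t)² − 2α² on I. -/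
open Set

/-- Explicit solution of the special Riccati problem `y' = 2y² − 2α²`,
`y(0) = x₀`. -/
theorem stmt12 (α x₀ : ℝ) (hα : 0 < α)
    (I : Set ℝ) (hI : I ⊆ Ici 0) (hI0 : (0:ℝ) ∈ I) (hIconn : I.OrdConnected)
    (D : ℝ → ℝ)
    (hD : ∀ t, D t = 2 * α + (x₀ - α) * (1 - Real.exp (4 * α * t)))
    (hDne : ∀ t ∈ I, D t ≠ 0)
    (y : ℝ → ℝ)
    (hy : ∀ t, y t = α * (1 + 2 * (x₀ - α) * Real.exp (4 * α * t) / D t)) :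
    y 0 = x₀ ∧ ∀ t ∈ I, HasDerivWithinAt y (2 * (y t) ^ 2 - 2 * α ^ 2) I t := by
  have hα' : α ≠ 0 := ne_of_gt hα
  have hDfun : D = fun t => 2 * α + (x₀ - α) * (1 - Real.exp (4 * α * t)) := funext hD
  have hyfun : y = fun t => α * (1 + 2 * (x₀ - α) * Real.exp (4 * α * t) / D t) := funext hy
  constructor
  · rw [hy, hD]
    simp only [mul_zero, Real.exp_zero, sub_self, mul_zero, add_zero]
    field_simp
    ring
  · intro t ht
    have hDt : D t ≠ 0 := hDne t ht
    have hDt' : 2 * α + (x₀ - α) * (1 - Real.exp (4 * α * t)) ≠ 0 := by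
      rw [← hD]; exact hDt
    have hE : HasDerivAt (fun s : ℝ => Real.exp (4 * α * s))
        (Real.exp (4 * α * t) * (4 * α)) t := by
      have h1 : HasDerivAt (fun s : ℝ => 4 * α * s) (4 * α) t := by
        simpa using (hasDerivAt_id t).const_mul (4 * α)
      exact h1.exp
    have hDd : HasDerivAt D ((x₀ - α) * (0 - Real.exp (4 * α * t) * (4 * α))) t := by
      rw [hDfun]
      exact (((hasDerivAt_const t (1:ℝ)).sub hE).const_mul (x₀ - α)).const_add (2 * α)
    have hnum : HasDerivAt (fun s => 2 * (x₀ - α) * Real.exp (4 * α * s))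
        (2 * (x₀ - α) * (Real.exp (4 * α * t) * (4 * α))) t := hE.const_mul _
    have hq := (hnum.div hDd hDt)
    have hy' : HasDerivAt y (α * ((2 * (x₀ - α) * (Real.exp (4 * α * t) * (4 * α)) * D t -
        2 * (x₀ - α) * Real.exp (4 * α * t) * ((x₀ - α) * (0 - Real.exp (4 * α * t) * (4 * α)))) /
        (D t) ^ 2)) t := by
      rw [hyfun]
      exact (hq.const_add 1).const_mul α
    have hval : α * ((2 * (x₀ - α) * (Real.exp (4 * α * t) * (4 * α)) * D t -
        2 * (x₀ - α) * Real.exp (4 * α * t) * ((x₀ - α) * (0 - Real.exp (4 * α * t) * (4 * α)))) /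
        (D t) ^ 2) = 2 * (y t) ^ 2 - 2 * α ^ 2 := by
      rw [hy, hD]
      have h2 : α * 2 + (x₀ - α) * (1 - Real.exp (α * 4 * t)) ≠ 0 := by
        rw [mul_comm α 2, mul_comm α 4]; exact hDt'
      field_simp
      ring
    rw [← hval]
    exact hy'.hasDerivWithinAt
end

section
/- Let α ≥ 0, γ > 0, δ ≥ 0, x ≥ 0, and set a = (√(α² + 2γ) − α)/2. Define φ(t,λ) = a + (λ − a)(2a + α) / ( e^{2t(α+2a)} (a + α + λ) + a − λ ) and ψ(t,λ) = δ a t − (δ/2) · log( 1 + (λ − a)(1 − e^{2t(α+2a)}) / ( e^{2t(α+2a)} (a + α + λ) + a − λ ) ). Then for all t ≥ 0, λ ≥ 0 the denominator e^{2t(α+2a)}(a+α+λ) + a − λ is strictly positive and the argument of the logarithm is strictly positive, and the function p(t,λ) = exp(−x φ(t,λ) − ψ(t,λ)) satisfies p(0,λ) = e^{−xλ} and solves ∂p/∂t(t,λ) = (γ − 2λ² − 2αλ) ∂p/∂λ(t,λ) − δ λ p(t,λ) on [0,∞) × [0,∞). -/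
open Set

set_option maxHeartbeats 2000000 in
/-- The joint Laplace transform of a squared radial Ornstein–Uhlenbeck process
and its time integral: positivity of the denominators and of the argument of
the logarithm, the initial condition `p(0,λ) = e^{−xλ}`, and the PDE
`∂p/∂t = (γ − 2λ² − 2αλ) ∂p/∂λ − δλ p`. Here `a = (√(α²+2γ) − α)/2`. -/
theorem stmt13 (α γ δ x : ℝ) (hα : 0 ≤ α) (hγ : 0 < γ) (hδ : 0 ≤ δ)
    (hx : 0 ≤ x)
    (a : ℝ) (ha : a = (Real.sqrt (α ^ 2 + 2 * γ) - α) / 2)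
    (φ ψ p : ℝ → ℝ → ℝ)
    (hφ : ∀ t l : ℝ, φ t l
      = a + (l - a) * (2 * a + α)
          / (Real.exp (2 * t * (α + 2 * a)) * (a + α + l) + a - l))
    (hψ : ∀ t l : ℝ, ψ t l
      = δ * a * t - δ / 2 *
          Real.log (1 + (l - a) * (1 - Real.exp (2 * t * (α + 2 * a)))
            / (Real.exp (2 * t * (α + 2 * a)) * (a + α + l) + a - l)))
    (hp : ∀ t l : ℝ, p t l = Real.exp (-(x * φ t l) - ψ t l)) :
    (∀ t l : ℝ, 0 ≤ t → 0 ≤ l →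
        0 < Real.exp (2 * t * (α + 2 * a)) * (a + α + l) + a - l
        ∧ 0 < 1 + (l - a) * (1 - Real.exp (2 * t * (α + 2 * a)))
            / (Real.exp (2 * t * (α + 2 * a)) * (a + α + l) + a - l))
    ∧ (∀ l ≥ (0:ℝ), p 0 l = Real.exp (-(x * l)))
    ∧ ∀ t l : ℝ, 0 ≤ t → 0 ≤ l →
        deriv (fun s => p s l) t
          = (γ - 2 * l ^ 2 - 2 * α * l) * deriv (fun m => p t m) l
            - δ * l * p t l := by
  have ha0 : 0 < a := by
    rw [ha]
    nlinarith [Real.sq_sqrt (by positivity : (0:ℝ) ≤ α ^ 2 + 2 * γ),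
      Real.sqrt_nonneg (α ^ 2 + 2 * γ)]
  have hγa : γ = 2 * a ^ 2 + 2 * a * α := by
    rw [ha]
    nlinarith [Real.sq_sqrt (by positivity : (0:ℝ) ≤ α ^ 2 + 2 * γ)]
  -- positivity of denominator and log argument
  have hDpos : ∀ t l : ℝ, 0 ≤ t → 0 ≤ l →
      0 < Real.exp (2 * t * (α + 2 * a)) * (a + α + l) + a - l := by
    intro t l ht hl
    have hE1 : 1 ≤ Real.exp (2 * t * (α + 2 * a)) := by
      rw [Real.one_le_exp_iff]
      positivity
    nlinarith [hE1]
  have hLpos : ∀ t l : ℝ, 0 ≤ t → 0 ≤ l →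
      0 < 1 + (l - a) * (1 - Real.exp (2 * t * (α + 2 * a)))
            / (Real.exp (2 * t * (α + 2 * a)) * (a + α + l) + a - l) := by
    intro t l ht hl
    have hD := hDpos t l ht hl
    have key : 1 + (l - a) * (1 - Real.exp (2 * t * (α + 2 * a)))
            / (Real.exp (2 * t * (α + 2 * a)) * (a + α + l) + a - l)
        = Real.exp (2 * t * (α + 2 * a)) * (2 * a + α)
            / (Real.exp (2 * t * (α + 2 * a)) * (a + α + l) + a - l) := by
      rw [eq_div_iff hD.ne', add_mul, div_mul_cancel₀ _ hD.ne']
      ring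
    rw [key]
    have := Real.exp_pos (2 * t * (α + 2 * a))
    positivity
  refine ⟨fun t l ht hl => ⟨hDpos t l ht hl, hLpos t l ht hl⟩, ?_, ?_⟩
  · intro l hl
    have h2a : (2 : ℝ) * a + α ≠ 0 := by positivity
    rw [hp, hφ, hψ]
    simp only [mul_zero, zero_mul, Real.exp_zero, one_mul, mul_zero, sub_zero]
    rw [show a + α + l + a - l = 2 * a + α by ring,
      show (l - a) * (1 - 1) = 0 by ring]
    rw [mul_div_assoc, div_self h2a, zero_div, add_zero, Real.log_one, mul_zero, zero_sub,
      sub_neg_eq_add]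
    ring_nf
  · intro t l ht hl
    have hDne : Real.exp (2 * t * (α + 2 * a)) * (a + α + l) + a - l ≠ 0 :=
      ne_of_gt (hDpos t l ht hl)
    have hLne : 1 + (l - a) * (1 - Real.exp (2 * t * (α + 2 * a)))
            / (Real.exp (2 * t * (α + 2 * a)) * (a + α + l) + a - l) ≠ 0 :=
      ne_of_gt (hLpos t l ht hl)
    -- derivative in t
    have h1 : HasDerivAt (fun s : ℝ => 2 * s * (α + 2 * a)) (2 * (α + 2 * a)) t := by
      simpa using ((hasDerivAt_id t).const_mul 2).mul_const (α + 2 * a)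
    have hE : HasDerivAt (fun s : ℝ => Real.exp (2 * s * (α + 2 * a)))
        (Real.exp (2 * t * (α + 2 * a)) * (2 * (α + 2 * a))) t := h1.exp
    have hDt : HasDerivAt
        (fun s : ℝ => Real.exp (2 * s * (α + 2 * a)) * (a + α + l) + a - l)
        (Real.exp (2 * t * (α + 2 * a)) * (2 * (α + 2 * a)) * (a + α + l)) t :=
      ((hE.mul_const (a + α + l)).add_const a).sub_const l
    have hφt := ((hasDerivAt_const t ((l - a) * (2 * a + α))).div hDt hDne).const_add a
    have hNt : HasDerivAt
        (fun s : ℝ => (l - a) * (1 - Real.exp (2 * s * (α + 2 * a))))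
        ((l - a) * -(Real.exp (2 * t * (α + 2 * a)) * (2 * (α + 2 * a)))) t :=
      (hE.const_sub 1).const_mul (l - a)
    have hLt := (hNt.div hDt hDne).const_add 1
    have hlogt := hLt.log hLne
    have hlint : HasDerivAt (fun s : ℝ => δ * a * s) (δ * a) t := by
      simpa using (hasDerivAt_id t).const_mul (δ * a)
    have hψt := hlint.sub (hlogt.const_mul (δ / 2))
    have hpt := ((hφt.const_mul x).neg.sub hψt).exp
    -- derivative in l
    have hDl : HasDerivAt
        (fun m : ℝ => Real.exp (2 * t * (α + 2 * a)) * (a + α + m) + a - m)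
        (Real.exp (2 * t * (α + 2 * a)) - 1) l := by
      have := ((((hasDerivAt_id l).const_add (a + α)).const_mul
        (Real.exp (2 * t * (α + 2 * a)))).add_const a).sub (hasDerivAt_id l)
      simpa [Pi.sub_def] using this
    have hnuml : HasDerivAt (fun m : ℝ => (m - a) * (2 * a + α)) (2 * a + α) l := by
      simpa using ((hasDerivAt_id l).sub_const a).mul_const (2 * a + α)
    have hφl := (hnuml.div hDl hDne).const_add a
    have hNl : HasDerivAt
        (fun m : ℝ => (m - a) * (1 - Real.exp (2 * t * (α + 2 * a))))
        (1 - Real.exp (2 * t * (α + 2 * a))) l := by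
      simpa using ((hasDerivAt_id l).sub_const a).mul_const
        (1 - Real.exp (2 * t * (α + 2 * a)))
    have hLl := (hNl.div hDl hDne).const_add 1
    have hlogl := hLl.log hLne
    have hψl := (hasDerivAt_const l (δ * a * t)).sub (hlogl.const_mul (δ / 2))
    have hpl := ((hφl.const_mul x).neg.sub hψl).exp
    -- rewrite functions
    have hf1 : (fun s => p s l) = (fun s : ℝ => Real.exp (-(x *
        (a + (l - a) * (2 * a + α)
          / (Real.exp (2 * s * (α + 2 * a)) * (a + α + l) + a - l))) -
        (δ * a * s - δ / 2 *
          Real.log (1 + (l - a) * (1 - Real.exp (2 * s * (α + 2 * a)))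
            / (Real.exp (2 * s * (α + 2 * a)) * (a + α + l) + a - l))))) := by
      funext s; rw [hp, hφ, hψ]
    have hf2 : (fun m => p t m) = (fun m : ℝ => Real.exp (-(x *
        (a + (m - a) * (2 * a + α)
          / (Real.exp (2 * t * (α + 2 * a)) * (a + α + m) + a - m))) -
        (δ * a * t - δ / 2 *
          Real.log (1 + (m - a) * (1 - Real.exp (2 * t * (α + 2 * a)))
            / (Real.exp (2 * t * (α + 2 * a)) * (a + α + m) + a - m))))) := by
      funext m; rw [hp, hφ, hψ]
    simp only [Pi.sub_apply, Pi.neg_apply, Pi.div_apply, Pi.add_apply, Pi.mul_apply] at hpt hpl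
    rw [hf1, hpt.deriv, hf2, hpl.deriv, hp t l, hφ, hψ, hγa]
    set E := Real.exp (2 * t * (α + 2 * a)) with hEdef
    set D := E * (a + α + l) + a - l with hDdef
    set L := 1 + (l - a) * (1 - E) / D with hLdef
    set P := Real.exp (-(x * (a + (l - a) * (2 * a + α) / D)) -
      (δ * a * t - δ / 2 * Real.log L)) with hPdef
    have hE0 : (0:ℝ) < E := hEdef ▸ Real.exp_pos _
    have hld : L = E * (2 * a + α) / D := by
      rw [hLdef, hDdef]
      rw [eq_div_iff (show E * (a + α + l) + a - l ≠ 0 from hDne), add_mul,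
        div_mul_cancel₀ _ (show E * (a + α + l) + a - l ≠ 0 from hDne)]
      ring
    rw [hld, hDdef]
    rw [hDdef] at hDne
    have h2a : (0:ℝ) < 2 * a + α := by positivity
    field_simp
    ring
end
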